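/- Let A be a derived (p,I)-complete δ-ring where I = (d) is generated by a distinguished element d. Then p, d is a regular sequence on A if and only if d, φ(d) is a regular sequence on A, where φ is the Frobenius lift of A. -/

import Mathlib

open scoped BigOperators

/-- A δ-structure on a commutative `ℤ_(p)`-algebra `A`: a map `δ : A → A` with
`δ(0) = δ(1) = 0`, `δ(a+b) = δ a + δ b + (a^p + b^p - (a+b)^p)/p` (expressed via binomial
coefficients divided by the prime `p`), and
`δ(ab) = a^p δ b + b^p δ a + p δ a δ b`.  The field `isUnit_of_not_dvd` expresses that `A`
is a `ℤ_(p)`-algebra. -/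
structure DeltaStructure (A : Type) [CommRing A] (p : ℕ) : Type where
  δ : A → A
  delta_zero : δ 0 = 0
  delta_one : δ 1 = 0
  delta_add : ∀ a b : A, δ (a + b) = δ a + δ b -
      ∑ i ∈ Finset.Ioo 0 p, (((p.choose i) / p : ℕ) : A) * a ^ i * b ^ (p - i)
  delta_mul : ∀ a b : A, δ (a * b) =
      a ^ p * δ b + b ^ p * δ a + (p : A) * δ a * δ b
  isUnit_of_not_dvd : ∀ n : ℤ, ¬ ((p : ℤ) ∣ n) → IsUnit ((n : A))

/-- The Frobenius lift `φ(a) = a^p + p·δ(a)` associated to a δ-structure. -/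
def DeltaStructure.phi {A : Type} [CommRing A] {p : ℕ} (D : DeltaStructure A p) (a : A) : A :=
  a ^ p + (p : A) * D.δ a

/-- An `A`-module `M` is derived `f`-complete iff the map `(xₙ) ↦ (xₙ - f·xₙ₊₁)` on `M^ℕ`
is bijective (equivalently, `Hom(A[1/f], M) = Ext¹(A[1/f], M) = 0`). -/
def DerivedFComplete {A : Type} [CommRing A] (f : A) (M : Type) [AddCommGroup M]
    [Module A M] : Prop :=
  Function.Bijective (fun x : ℕ → M => fun n => x n - f • x (n + 1))

open scoped Pointwise

lemma aux_smul_top {A : Type} [CommRing A] (a : A) :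
    (a • ⊤ : Submodule A A) = Ideal.span {a} := by
  rw [← Submodule.ideal_span_singleton_smul, smul_eq_mul, Ideal.mul_top]

lemma aux_reg_iff {A : Type} [CommRing A] (a : A) :
    IsSMulRegular A a ↔ ∀ x : A, a * x = 0 → x = 0 := by
  constructor
  · intro h x hx
    exact h (show a • x = a • 0 by simpa [smul_eq_mul] using hx)
  · intro h x y hxy
    have := h (x - y) (by rw [mul_sub, sub_eq_zero]; simpa [smul_eq_mul] using hxy)
    exact sub_eq_zero.mp this

lemma aux_quot_reg_iff {A : Type} [CommRing A] (a b : A) :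
    IsSMulRegular (QuotSMulTop a A) b ↔
      ∀ x : A, b * x ∈ Ideal.span {a} → x ∈ Ideal.span {a} := by
  constructor
  · intro h x hx
    rw [← aux_smul_top] at hx ⊢
    have h0 : b • (Submodule.Quotient.mk x : QuotSMulTop a A) = b • (0 : QuotSMulTop a A) := by
      rw [smul_zero, ← Submodule.Quotient.mk_smul]
      exact (Submodule.Quotient.mk_eq_zero _).mpr (by simpa [smul_eq_mul] using hx)
    have := h h0
    exact (Submodule.Quotient.mk_eq_zero _).mp this
  · intro h x y hxy
    obtain ⟨x, rfl⟩ := Submodule.Quotient.mk_surjective _ x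
    obtain ⟨y, rfl⟩ := Submodule.Quotient.mk_surjective _ y
    simp only [← Submodule.Quotient.mk_smul] at hxy
    rw [Submodule.Quotient.eq, aux_smul_top] at hxy
    rw [Submodule.Quotient.eq, aux_smul_top]
    exact h _ (by simpa [smul_eq_mul, ← mul_sub] using hxy)

lemma aux_pair_iff {A : Type} [CommRing A] (a b : A) :
    RingTheory.Sequence.IsWeaklyRegular A [a, b] ↔
      (∀ x : A, a * x = 0 → x = 0) ∧
        (∀ x : A, b * x ∈ Ideal.span {a} → x ∈ Ideal.span {a}) := by
  rw [RingTheory.Sequence.isWeaklyRegular_cons_iff,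
    RingTheory.Sequence.isWeaklyRegular_singleton_iff, aux_reg_iff, aux_quot_reg_iff]

lemma aux_swap {A : Type} [CommRing A] (a b : A) (hc : DerivedFComplete a A)
    (h1 : ∀ x : A, a * x = 0 → x = 0)
    (h2 : ∀ x : A, b * x ∈ Ideal.span {a} → x ∈ Ideal.span {a}) :
    (∀ x : A, b * x = 0 → x = 0) ∧
      (∀ x : A, a * x ∈ Ideal.span {b} → x ∈ Ideal.span {b}) := by
  constructor
  · intro x hx
    have step : ∀ y : A, b * y = 0 → ∃ z : A, y = a * z ∧ b * z = 0 := by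
      intro y hy
      obtain ⟨z, hz⟩ := Ideal.mem_span_singleton'.mp (h2 y (by simp [hy]))
      refine ⟨z, by rw [← hz, mul_comm], ?_⟩
      apply h1
      have : a * (b * z) = b * y := by rw [← hz]; ring
      rw [this, hy]
    choose f hf1 hf2 using step
    let s : ℕ → {y : A // b * y = 0} := fun n =>
      Nat.rec ⟨x, hx⟩ (fun _ prev => ⟨f prev.1 prev.2, hf2 prev.1 prev.2⟩) n
    have hs : ∀ n, (s n).1 = a * (s (n + 1)).1 := fun n => hf1 (s n).1 (s n).2
    have hz : (fun n => (s n).1) = (0 : ℕ → A) := by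
      apply hc.injective
      funext n
      simp only [smul_eq_mul, Pi.zero_apply, ← hs n, sub_self, mul_zero, sub_zero]
    have := congrFun hz 0
    exact this
  · intro x hxa
    obtain ⟨y, hy⟩ := Ideal.mem_span_singleton'.mp hxa
    have hby : b * y ∈ Ideal.span {a} := by
      rw [Ideal.mem_span_singleton']
      exact ⟨x, by linear_combination -hy⟩
    obtain ⟨z, hz⟩ := Ideal.mem_span_singleton'.mp (h2 y hby)
    have : a * (x - z * b) = 0 := by
      have : a * x = y * b := hy.symm
      rw [mul_sub, this, ← hz]; ring
    have hx0 := h1 _ this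
    rw [Ideal.mem_span_singleton']
    exact ⟨z, by linear_combination -hx0⟩

theorem statement11 (p : ℕ) [Fact (Nat.Prime p)] {A : Type} [CommRing A]
    (D : DeltaStructure A p) (d : A) (hdist : IsUnit (D.δ d))
    (hc1 : DerivedFComplete (p : A) A) (hc2 : DerivedFComplete d A) :
    RingTheory.Sequence.IsWeaklyRegular A [(p : A), d] ↔
      RingTheory.Sequence.IsWeaklyRegular A [d, D.phi d] := by
  have hp : p ≠ 0 := (Fact.out : Nat.Prime p).ne_zero
  obtain ⟨u, hu⟩ := hdist
  have key : ∀ x : A, (D.phi d * x ∈ Ideal.span {d} ↔ (p : A) * x ∈ Ideal.span {d}) := by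
    intro x
    have h1 : d ^ p * x ∈ Ideal.span {d} :=
      Ideal.mul_mem_right _ _ (Ideal.mem_span_singleton.mpr (dvd_pow_self d hp))
    have hsplit : D.phi d * x = d ^ p * x + (p : A) * D.δ d * x := by
      unfold DeltaStructure.phi; ring
    constructor
    · intro h
      have h2 : (p : A) * D.δ d * x ∈ Ideal.span {d} := by
        have := Ideal.sub_mem _ h h1
        rw [hsplit] at this
        simpa using this
      have h3 := Ideal.mul_mem_left _ ((u⁻¹ : Aˣ) : A) h2
      have hinv : ((u⁻¹ : Aˣ) : A) * (u : A) = 1 := u.inv_mul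
      have heq : (p : A) * x = ((u⁻¹ : Aˣ) : A) * ((p : A) * D.δ d * x) := by
        rw [← hu]
        linear_combination (-(p : A) * x) * hinv
      rw [heq]
      exact h3
    · intro h
      have h2 : (p : A) * D.δ d * x ∈ Ideal.span {d} := by
        have := Ideal.mul_mem_left _ (D.δ d) h
        have heq : (p : A) * D.δ d * x = D.δ d * ((p : A) * x) := by ring
        rw [heq]; exact this
      rw [hsplit]
      exact Ideal.add_mem _ h1 h2
  rw [aux_pair_iff, aux_pair_iff]
  constructor
  · rintro ⟨h1, h2⟩
    obtain ⟨g1, g2⟩ := aux_swap (p : A) d hc1 h1 h2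
    exact ⟨g1, fun x hx => g2 x ((key x).mp hx)⟩
  · rintro ⟨g1, g2'⟩
    have g2 : ∀ x : A, (p : A) * x ∈ Ideal.span {d} → x ∈ Ideal.span {d} :=
      fun x hx => g2' x ((key x).mpr hx)
    obtain ⟨h1, h2⟩ := aux_swap d (p : A) hc2 g1 g2
    exact ⟨h1, h2⟩
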